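/- Let (X,d) be a compact metric space, T : X → X a homeomorphism, μ a T-invariant regular Borel probability measure, and f ∈ L¹(X,μ). If f is μ-mean equicontinuous in the measure-theoretic sense (for every ε>0 there are finitely many measurable sets A₁,…,A_k with μ(⋃A_i)>1−ε such that limsup_n (1/n)∑_{i=0}^{n−1}|f(Tⁱx)−f(Tⁱy)|<ε whenever x,y lie in a common A_i), then f is (μ,d)-mean equicontinuous: for every τ>0 there is a compact K with μ(K)>1−τ such that for every ε>0 there is δ>0 with limsup_n (1/n)∑_{i=0}^{n−1}|f(Tⁱx)−f(Tⁱy)|<ε whenever x,y∈K and d(x,y)<δ. -/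

import Mathlib

open MeasureTheory Filter Metric Set ENNReal
set_option maxHeartbeats 1000000

/-- Birkhoff average of `|f(Tⁱx) - f(Tⁱy)|`. -/
noncomputable def fbar {X : Type*} (T : X → X) (f : X → ℝ) (n : ℕ) (x y : X) : ℝ :=
  (∑ i ∈ Finset.range n, |f (T^[i] x) - f (T^[i] y)|) / n


lemma key {X : Type*} [MetricSpace X] [CompactSpace X]
    [MeasurableSpace X] [BorelSpace X]
    (μ : Measure X) [IsProbabilityMeasure μ] [μ.Regular]
    (F : X → X → ℝ) {ε₀ : ℝ} (hε₀ : 0 < ε₀) (hε₁ : ε₀ < 1)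
    (h : ∃ (k : ℕ) (A : Fin k → Set X),
      (∀ i, MeasurableSet (A i)) ∧ μ (⋃ i, A i) > ENNReal.ofReal (1 - ε₀) ∧
      ∀ i : Fin k, ∀ x ∈ A i, ∀ y ∈ A i, F x y < ε₀) :
    ∃ K : Set X, IsCompact K ∧ μ Kᶜ ≤ ENNReal.ofReal (2 * ε₀) ∧
      ∃ δ : ℝ, 0 < δ ∧ ∀ x ∈ K, ∀ y ∈ K, dist x y < δ → F x y < ε₀ := by
  obtain ⟨k, A, hAm, hAμ, hA⟩ := h
  -- k is positive
  have hk : 0 < k := by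
    rcases Nat.eq_zero_or_pos k with hk0 | hk
    · exfalso
      subst hk0
      simp only [Set.iUnion_of_empty, measure_empty] at hAμ
      exact absurd hAμ (by simp [ENNReal.ofReal_pos.2 (by linarith : (0:ℝ) < 1 - ε₀)])
    · exact hk
  -- extend to ℕ-indexed family and disjointify
  set A' : ℕ → Set X := fun n => if h : n < k then A ⟨n, h⟩ else ∅ with hA'
  have hA'm : ∀ n, MeasurableSet (A' n) := by
    intro n; by_cases h : n < k <;> simp [hA', h, hAm]
  set B : ℕ → Set X := disjointed A' with hB
  have hBm : ∀ n, MeasurableSet (B n) := MeasurableSet.disjointed hA'm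
  have hBsub : ∀ n, B n ⊆ A' n := disjointed_subset A'
  have hBdisj : Pairwise (Function.onFun Disjoint B) := disjoint_disjointed A'
  have hBU : (⋃ n, B n) = ⋃ i : Fin k, A i := by
    rw [hB, iUnion_disjointed]
    ext x
    simp only [mem_iUnion, hA']
    constructor
    · rintro ⟨n, hn⟩
      by_cases h : n < k
      · exact ⟨⟨n, h⟩, by simpa [h] using hn⟩
      · simp [h] at hn
    · rintro ⟨i, hi⟩
      exact ⟨i.1, by simp [i.2, hi]⟩
  -- compact approximations
  have hCex : ∀ i : Fin k, ∃ C, C ⊆ B i.1 ∧ IsCompact C ∧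
      μ (B i.1) < μ C + ENNReal.ofReal (ε₀ / k) := by
    intro i
    exact (hBm i.1).exists_isCompact_lt_add (measure_ne_top μ _)
      (ENNReal.ofReal_pos.2 (div_pos hε₀ (Nat.cast_pos.2 hk))).ne'
  choose C hCsub hCcomp hClt using hCex
  refine ⟨⋃ i : Fin k, C i, isCompact_iUnion hCcomp, ?_, ?_⟩
  · -- measure bound
    have h1 : (⋃ i : Fin k, C i)ᶜ ⊆ (⋃ i : Fin k, A i)ᶜ ∪ ((⋃ i : Fin k, A i) \ ⋃ i : Fin k, C i) := by
      intro x hx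
      by_cases h : x ∈ ⋃ i : Fin k, A i
      · exact Or.inr ⟨h, hx⟩
      · exact Or.inl h
    have h2 : μ ((⋃ i : Fin k, A i)ᶜ) ≤ ENNReal.ofReal ε₀ := by
      rw [prob_compl_eq_one_sub (MeasurableSet.iUnion hAm)]
      refine (tsub_le_tsub_left hAμ.le 1).trans ?_
      rw [show (1:ℝ≥0∞) = ENNReal.ofReal 1 from ENNReal.ofReal_one.symm,
        ← ENNReal.ofReal_sub _ (by linarith)]
      norm_num
    have h3 : μ ((⋃ i : Fin k, A i) \ ⋃ i : Fin k, C i) ≤ ENNReal.ofReal ε₀ := by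
      have hsub : (⋃ i : Fin k, A i) \ (⋃ i : Fin k, C i) ⊆ ⋃ i : Fin k, (B i.1 \ C i) := by
        rintro x ⟨hx1, hx2⟩
        rw [← hBU] at hx1
        obtain ⟨n, hn⟩ := mem_iUnion.1 hx1
        have hnk : n < k := by
          by_contra h
          have := hBsub n hn
          simp [hA', h] at this
        refine mem_iUnion.2 ⟨⟨n, hnk⟩, hn, fun hc => hx2 (mem_iUnion.2 ⟨⟨n, hnk⟩, hc⟩)⟩
      calc μ ((⋃ i : Fin k, A i) \ ⋃ i : Fin k, C i) ≤ ∑ i : Fin k, μ (B i.1 \ C i) :=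
            (measure_mono hsub).trans (measure_iUnion_fintype_le _ _)
        _ ≤ ∑ _i : Fin k, ENNReal.ofReal (ε₀ / k) := by
            refine Finset.sum_le_sum fun i _ => ?_
            rw [measure_diff (hCsub i) (hCcomp i).isClosed.measurableSet.nullMeasurableSet
              (measure_ne_top μ _)]
            exact tsub_le_iff_left.2 (hClt i).le
        _ = ENNReal.ofReal ε₀ := by
            rw [Finset.sum_const, Finset.card_univ, Fintype.card_fin, nsmul_eq_mul,
              ← ENNReal.ofReal_natCast, ← ENNReal.ofReal_mul (Nat.cast_nonneg k),
              mul_div_cancel₀]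
            exact Nat.cast_ne_zero.2 hk.ne'
    calc μ ((⋃ i : Fin k, C i)ᶜ)
        ≤ μ ((⋃ i : Fin k, A i)ᶜ) + μ ((⋃ i : Fin k, A i) \ ⋃ i : Fin k, C i) :=
          (measure_mono h1).trans (measure_union_le _ _)
      _ ≤ ENNReal.ofReal ε₀ + ENNReal.ofReal ε₀ := add_le_add h2 h3
      _ = ENNReal.ofReal (2 * ε₀) := by rw [← ENNReal.ofReal_add hε₀.le hε₀.le]; ring_nf
  · -- separation
    have hCdisj : ∀ i j : Fin k, i ≠ j → Disjoint (C i) (C j) := by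
      intro i j hij
      exact Disjoint.mono (hCsub i) (hCsub j) (hBdisj (fun h => hij (Fin.val_injective h)))
    have hδex : ∀ i : Fin k, ∃ δ, 0 < δ ∧
        Disjoint (thickening δ (C i)) (thickening δ (⋃ j ∈ ({i}ᶜ : Set (Fin k)), C j)) := by
      intro i
      refine Disjoint.exists_thickenings ?_ (hCcomp i) ?_
      · rw [disjoint_iUnion₂_right]
        intro j hj
        exact hCdisj i j (fun h => hj (by simp [h]))
      · exact (Set.Finite.isCompact_biUnion (Set.toFinite _) (fun j _ => hCcomp j)).isClosed
    choose δf hδfpos hδfdisj using hδex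
    have hne : (Finset.univ : Finset (Fin k)).Nonempty := by
      simpa [Finset.univ_nonempty_iff] using Fin.pos_iff_nonempty.1 hk
    refine ⟨Finset.univ.inf' hne δf, ?_, ?_⟩
    · exact (Finset.lt_inf'_iff hne).2 fun i _ => hδfpos i
    · intro x hx y hy hxy
      obtain ⟨i, hxi⟩ := mem_iUnion.1 hx
      obtain ⟨j, hyj⟩ := mem_iUnion.1 hy
      have hij : i = j := by
        by_contra hij
        have h1 : y ∈ thickening (δf i) (C i) := by
          rw [mem_thickening_iff]
          exact ⟨x, hxi, by
            rw [dist_comm]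
            exact lt_of_lt_of_le hxy (Finset.inf'_le δf (Finset.mem_univ i))⟩
        have h2 : y ∈ thickening (δf i) (⋃ j ∈ ({i}ᶜ : Set (Fin k)), C j) :=
          self_subset_thickening (hδfpos i) _ (mem_biUnion (by simp [Ne.symm hij]) hyj)
        exact (hδfdisj i).ne_of_mem h1 h2 rfl
      subst hij
      have hiA : C i ⊆ A i := by
        refine (hCsub i).trans ((hBsub i.1).trans ?_)
        simp [hA', i.2]
      exact hA i x (hiA hxi) y (hiA hyj)

theorem stmt1 {X : Type*} [MetricSpace X] [CompactSpace X]
    [MeasurableSpace X] [BorelSpace X]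
    (T : X ≃ₜ X) (μ : Measure X) [IsProbabilityMeasure μ] [μ.Regular]
    (hT : MeasurePreserving (⇑T) μ μ) (f : X → ℝ) (hf : Integrable f μ)
    (hmec : ∀ ε : ℝ, 0 < ε → ∃ (k : ℕ) (A : Fin k → Set X),
      (∀ i, MeasurableSet (A i)) ∧ μ (⋃ i, A i) > ENNReal.ofReal (1 - ε) ∧
      ∀ i : Fin k, ∀ x ∈ A i, ∀ y ∈ A i,
        Filter.limsup (fun n => fbar (⇑T) f n x y) Filter.atTop < ε) :
    ∀ τ : ℝ, 0 < τ → ∃ K : Set X, IsCompact K ∧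
      μ K > ENNReal.ofReal (1 - τ) ∧
      ∀ ε : ℝ, 0 < ε → ∃ δ : ℝ, 0 < δ ∧ ∀ x ∈ K, ∀ y ∈ K, dist x y < δ →
        Filter.limsup (fun n => fbar (⇑T) f n x y) Filter.atTop < ε := by
  intro τ hτ
  set τ' : ℝ := min (τ / 2) 4⁻¹ with hτ'def
  have hτ'pos : 0 < τ' := lt_min (by linarith) (by norm_num)
  have hτ'lt : τ' < τ := (min_le_left _ _).trans_lt (by linarith)
  have hτ'le : τ' ≤ 4⁻¹ := min_le_right _ _
  have hKm : ∀ m : ℕ, ∃ K : Set X, IsCompact K ∧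
      μ Kᶜ ≤ ENNReal.ofReal (τ' * (1/2) ^ (m+1)) ∧
      ∃ δ : ℝ, 0 < δ ∧ ∀ x ∈ K, ∀ y ∈ K, dist x y < δ →
        Filter.limsup (fun n => fbar (⇑T) f n x y) Filter.atTop < τ' * (1/2) ^ (m+2) := by
    intro m
    have hε₀ : 0 < τ' * (1/2:ℝ) ^ (m+2) := by positivity
    have hε₁ : τ' * (1/2:ℝ) ^ (m+2) < 1 := by
      have h1 : (1/2:ℝ) ^ (m+2) ≤ 1 := pow_le_one₀ (by norm_num) (by norm_num)
      nlinarith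
    obtain ⟨K, hKc, hKμ, hδ⟩ := key μ _ hε₀ hε₁ (hmec _ hε₀)
    refine ⟨K, hKc, hKμ.trans (ENNReal.ofReal_le_ofReal ?_), hδ⟩
    rw [pow_succ]
    ring_nf
    linarith
  choose Km hKmc hKmμ hKmδ using hKm
  have hclosed : IsClosed (⋂ m, Km m) := isClosed_iInter fun m => (hKmc m).isClosed
  refine ⟨⋂ m, Km m, hclosed.isCompact, ?_, ?_⟩
  · have hsum : Summable (fun m : ℕ => τ' * (1/2:ℝ) ^ (m+1)) := by
      apply Summable.mul_left
      simp_rw [pow_succ]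
      exact (summable_geometric_of_lt_one (r := (1/2:ℝ)) (by norm_num) (by norm_num)).mul_right _
    have htsum : ∑' m : ℕ, τ' * (1/2:ℝ) ^ (m+1) = τ' := by
      rw [tsum_mul_left]
      have h2 : ∑' m : ℕ, ((1:ℝ)/2) ^ (m+1) = 1 := by
        simp_rw [pow_succ]
        rw [tsum_mul_right, tsum_geometric_of_lt_one (r := (1/2:ℝ)) (by norm_num) (by norm_num)]
        norm_num
      rw [h2, mul_one]
    have hcompl : μ ((⋂ m, Km m)ᶜ) ≤ ENNReal.ofReal τ' := by
      rw [compl_iInter]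
      refine (measure_iUnion_le _).trans ?_
      calc ∑' m, μ (Km m)ᶜ ≤ ∑' m, ENNReal.ofReal (τ' * (1/2) ^ (m+1)) :=
            ENNReal.tsum_le_tsum hKmμ
        _ = ENNReal.ofReal (∑' m : ℕ, τ' * (1/2) ^ (m+1)) :=
            (ENNReal.ofReal_tsum_of_nonneg (fun m => by positivity) hsum).symm
        _ = ENNReal.ofReal τ' := by rw [htsum]
    have hadd : μ (⋂ m, Km m) + μ ((⋂ m, Km m)ᶜ) = 1 := by
      rw [measure_add_measure_compl hclosed.measurableSet, measure_univ]
    have h1 : (1:ℝ≥0∞) ≤ μ (⋂ m, Km m) + ENNReal.ofReal τ' := by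
      rw [← hadd]
      exact add_le_add le_rfl hcompl
    have h2 : ENNReal.ofReal (1 - τ') ≤ μ (⋂ m, Km m) := by
      rw [ENNReal.ofReal_sub _ hτ'pos.le, ENNReal.ofReal_one]
      exact tsub_le_iff_right.2 h1
    refine lt_of_lt_of_le ?_ h2
    exact (ENNReal.ofReal_lt_ofReal_iff (by linarith)).2 (by linarith)
  · intro ε hε
    obtain ⟨m, hm⟩ := exists_pow_lt_of_lt_one hε (show (1/2:ℝ) < 1 by norm_num)
    obtain ⟨δ, hδpos, hδ⟩ := hKmδ m
    refine ⟨δ, hδpos, fun x hx y hy hxy => ?_⟩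
    have h1 := hδ x (mem_iInter.1 hx m) y (mem_iInter.1 hy m) hxy
    have hp : (0:ℝ) < (1/2) ^ m := by positivity
    have h2 : τ' * (1/2:ℝ) ^ (m+2) ≤ (1/2) ^ m := by
      rw [pow_add]
      have h3 : ((1:ℝ)/2) ^ 2 = 1/4 := by norm_num
      nlinarith
    linarith
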